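/- Let R be a ring, M an R-module, and M₁, M₂, M₃ submodules of M such that the quotients (M₁+M₂)/(M₁∩M₂) and (M₂+M₃)/(M₂∩M₃) are finite. Then (M₁+M₃)/(M₁∩M₃) is finite and Card((M₁+M₃)/(M₁∩M₃)) ≤ Card((M₁+M₂)/(M₁∩M₂)) · Card((M₂+M₃)/(M₂∩M₃)). -/

import Mathlib

/-- The quotient module `(M₁ + M₂)/(M₁ ∩ M₂)` attached to two submodules. -/
abbrev latticeQuot {R M : Type*} [Ring R] [AddCommGroup M] [Module R M]
    (M₁ M₂ : Submodule R M) :=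
  (M₁ ⊔ M₂ : Submodule R M) ⧸ ((M₁ ⊓ M₂).comap (M₁ ⊔ M₂).subtype)

/-- `relindex` of submodules as add subgroups computes the cardinality of `latticeQuot`. -/
lemma card_latticeQuot {R M : Type*} [Ring R] [AddCommGroup M] [Module R M]
    (M₁ M₂ : Submodule R M) :
    Nat.card (latticeQuot M₁ M₂)
      = (M₁.toAddSubgroup ⊓ M₂.toAddSubgroup).relIndex
          (M₁.toAddSubgroup ⊔ M₂.toAddSubgroup) := by
  rw [← Submodule.sup_toAddSubgroup]
  rfl

/-- In an abelian group, `(A ⊓ B).relIndex (A ⊔ B)` factors as a product of relative indices. -/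
lemma relindex_inf_sup_eq {M : Type*} [AddCommGroup M] (A B : AddSubgroup M) :
    (A ⊓ B).relIndex (A ⊔ B) = B.relIndex A * A.relIndex B := by
  rw [← AddSubgroup.relIndex_mul_relIndex (A ⊓ B) A (A ⊔ B) inf_le_left le_sup_left,
    AddSubgroup.inf_relIndex_left, AddSubgroup.relIndex_sup_left]

/-- Triangle inequality for relative indices in an abelian group. -/
lemma relindex_triangle {M : Type*} [AddCommGroup M] (A B C : AddSubgroup M)
    (hAB : A.relIndex B ≠ 0) (hBC : B.relIndex C ≠ 0) :
    A.relIndex C ≤ A.relIndex B * B.relIndex C := by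
  have hABC : A.relIndex (B ⊓ C) ≠ 0 :=
    mt (AddSubgroup.relIndex_eq_zero_of_le_right inf_le_left) hAB
  have hkey : A.relIndex (B ⊓ C) * B.relIndex C = (A ⊓ B).relIndex C :=
    AddSubgroup.relIndex_inf_mul_relIndex A B C
  have hne : (A ⊓ B).relIndex C ≠ 0 := hkey ▸ mul_ne_zero hABC hBC
  calc A.relIndex C ≤ (A ⊓ B).relIndex C :=
        AddSubgroup.relIndex_le_of_le_left inf_le_left hne
    _ = A.relIndex (B ⊓ C) * B.relIndex C := hkey.symm
    _ ≤ A.relIndex B * B.relIndex C :=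
        Nat.mul_le_mul_right _ (AddSubgroup.relIndex_le_of_le_right inf_le_left hAB)

/-- If `(M₁+M₂)/(M₁∩M₂)` and `(M₂+M₃)/(M₂∩M₃)` are finite then so is
`(M₁+M₃)/(M₁∩M₃)`, with cardinality at most the product of the two
cardinalities. -/
theorem latticeQuot_card_triangle (R : Type*) [Ring R]
    (M : Type*) [AddCommGroup M] [Module R M]
    (M₁ M₂ M₃ : Submodule R M)
    (h₁₂ : Finite (latticeQuot M₁ M₂)) (h₂₃ : Finite (latticeQuot M₂ M₃)) :
    Finite (latticeQuot M₁ M₃)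
      ∧ Nat.card (latticeQuot M₁ M₃)
          ≤ Nat.card (latticeQuot M₁ M₂) * Nat.card (latticeQuot M₂ M₃) := by
  set A := M₁.toAddSubgroup
  set B := M₂.toAddSubgroup
  set C := M₃.toAddSubgroup
  have e12 : Nat.card (latticeQuot M₁ M₂) = B.relIndex A * A.relIndex B :=
    (card_latticeQuot M₁ M₂).trans (relindex_inf_sup_eq A B)
  have e23 : Nat.card (latticeQuot M₂ M₃) = C.relIndex B * B.relIndex C :=
    (card_latticeQuot M₂ M₃).trans (relindex_inf_sup_eq B C)
  have e13 : Nat.card (latticeQuot M₁ M₃) = C.relIndex A * A.relIndex C :=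
    (card_latticeQuot M₁ M₃).trans (relindex_inf_sup_eq A C)
  have h12ne : Nat.card (latticeQuot M₁ M₂) ≠ 0 := Nat.card_ne_zero.mpr ⟨⟨0⟩, h₁₂⟩
  have h23ne : Nat.card (latticeQuot M₂ M₃) ≠ 0 := Nat.card_ne_zero.mpr ⟨⟨0⟩, h₂₃⟩
  rw [e12] at h12ne
  rw [e23] at h23ne
  have hBA : B.relIndex A ≠ 0 := left_ne_zero_of_mul h12ne
  have hAB : A.relIndex B ≠ 0 := right_ne_zero_of_mul h12ne
  have hCB : C.relIndex B ≠ 0 := left_ne_zero_of_mul h23ne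
  have hBC : B.relIndex C ≠ 0 := right_ne_zero_of_mul h23ne
  have hCA : C.relIndex A ≠ 0 := AddSubgroup.relIndex_ne_zero_trans hCB hBA
  have hAC : A.relIndex C ≠ 0 := AddSubgroup.relIndex_ne_zero_trans hAB hBC
  constructor
  · have : Nat.card (latticeQuot M₁ M₃) ≠ 0 := by rw [e13]; exact mul_ne_zero hCA hAC
    exact (Nat.card_ne_zero.mp this).2
  · calc Nat.card (latticeQuot M₁ M₃) = C.relIndex A * A.relIndex C := e13
      _ ≤ (C.relIndex B * B.relIndex A) * (A.relIndex B * B.relIndex C) :=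
          Nat.mul_le_mul (relindex_triangle C B A hCB hBA) (relindex_triangle A B C hAB hBC)
      _ = (B.relIndex A * A.relIndex B) * (C.relIndex B * B.relIndex C) := by ring
      _ = Nat.card (latticeQuot M₁ M₂) * Nat.card (latticeQuot M₂ M₃) := by rw [e12, e23]
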